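/- Let d ≥ 3 be an integer and let Γ be a symmetric numerical semigroup with exactly δ = (d − 1)(d − 2)/2 gaps. Define Q(t) := Σ_{k∉Γ} (1 + t + ⋯ + t^{k−1}) ∈ ℤ[t], Δ(t) := 1 + δ(t − 1) + (t − 1)²Q(t) ∈ ℤ[t], and c_l := #{k ∈ Γ : k ≤ ld} for 0 ≤ l ≤ d − 3. Then for every complex number t with t^d ≠ 1: (1/d)·Σ_{ξ: ξ^d = 1} Δ(ξt)/(1 − ξt)² − (1 − t^{d²})/(1 − t^d)³ = Σ_{l=0}^{d−3} (c_l − (l + 1)(l + 2)/2)·t^{(d−3−l)d}, where the sum on the left is over all d-th roots of unity ξ in ℂ. -/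

import Mathlib

open Polynomial Finset

lemma roots_pow_sum (d : ℕ) (hd : 0 < d) (m : ℕ) :
    ∑ ξ ∈ Polynomial.nthRootsFinset d (1 : ℂ), ξ ^ m = if d ∣ m then (d : ℂ) else 0 := by
  obtain h := Complex.isPrimitiveRoot_exp d hd.ne'
  set ζ := Complex.exp (2 * Real.pi * Complex.I / d)
  have himg : Polynomial.nthRootsFinset d (1 : ℂ) = (Finset.range d).image (ζ ^ ·) := by
    symm
    apply Finset.eq_of_subset_of_card_le
    · intro x hx
      simp only [Finset.mem_image, Finset.mem_range] at hx
      obtain ⟨j, hj, rfl⟩ := hx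
      rw [Polynomial.mem_nthRootsFinset hd, ← pow_mul, mul_comm, pow_mul, h.pow_eq_one, one_pow]
    · rw [h.card_nthRootsFinset, Finset.card_image_of_injOn]
      · simp
      · intro i hi j hj hij
        exact h.pow_inj (Finset.mem_range.1 hi) (Finset.mem_range.1 hj) hij
  rw [himg, Finset.sum_image (fun i hi j hj hij =>
    h.pow_inj (Finset.mem_range.1 hi) (Finset.mem_range.1 hj) hij)]
  have : ∀ j, (ζ ^ j) ^ m = (ζ ^ m) ^ j := fun j => by rw [← pow_mul, mul_comm, pow_mul]
  simp only [this]
  by_cases hdm : d ∣ m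
  · have : ζ ^ m = 1 := by
      obtain ⟨q, rfl⟩ := hdm
      rw [pow_mul, h.pow_eq_one, one_pow]
    simp only [this, one_pow, Finset.sum_const, Finset.card_range, nsmul_eq_mul, mul_one]
    exact (if_pos hdm).symm
  · have hne : ζ ^ m ≠ 1 := fun hcon => hdm ((h.pow_eq_one_iff_dvd m).1 hcon)
    rw [geom_sum_eq hne, if_neg hdm, ← pow_mul, mul_comm m d, pow_mul, h.pow_eq_one, one_pow,
      sub_self, zero_div]
lemma sum_pow_div_one_sub (d : ℕ) (hd : 0 < d) (t : ℂ) (ht : t ^ d ≠ 1) (k : ℕ) :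
    ∑ ξ ∈ Polynomial.nthRootsFinset d (1 : ℂ), (ξ * t) ^ k / (1 - ξ * t)
      = (d : ℂ) * t ^ (d * ((k + d - 1) / d)) / (1 - t ^ d) := by
  have hu : (1 : ℂ) - t ^ d ≠ 0 := sub_ne_zero.2 (Ne.symm ht)
  have key : ∀ ξ ∈ Polynomial.nthRootsFinset d (1 : ℂ),
      (ξ * t) ^ k / (1 - ξ * t) = ∑ j ∈ Finset.range d, ξ ^ (k + j) * t ^ (k + j) / (1 - t ^ d) := by
    intro ξ hξ
    have hξd : ξ ^ d = 1 := (Polynomial.mem_nthRootsFinset hd 1).1 hξ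
    have hxd : (ξ * t) ^ d = t ^ d := by rw [mul_pow, hξd, one_mul]
    have hne : (1 : ℂ) - ξ * t ≠ 0 := by
      intro hcon
      have : ξ * t = 1 := by linear_combination -hcon
      rw [← hxd, this, one_pow] at ht; exact ht rfl
    have hgeom : (1 - ξ * t) * ∑ j ∈ Finset.range d, (ξ * t) ^ j = 1 - t ^ d := by
      have := geom_sum_mul (ξ * t) d
      rw [← hxd]; linear_combination -this
    rw [eq_comm, ← Finset.sum_div, div_eq_div_iff hu hne, ← hgeom, Finset.sum_mul,
      Finset.mul_sum, Finset.mul_sum]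
    refine Finset.sum_congr rfl fun j _ => ?_
    rw [pow_add, pow_add, mul_pow, mul_pow]
    ring
  rw [Finset.sum_congr rfl key, Finset.sum_comm]
  -- now ∑ j ∑ ξ
  have inner : ∀ j ∈ Finset.range d,
      ∑ ξ ∈ Polynomial.nthRootsFinset d (1 : ℂ), ξ ^ (k + j) * t ^ (k + j) / (1 - t ^ d)
        = (if d ∣ k + j then (d:ℂ) else 0) * t ^ (k + j) / (1 - t ^ d) := by
    intro j _
    rw [← Finset.sum_div, ← Finset.sum_mul, roots_pow_sum d hd]
  rw [Finset.sum_congr rfl inner]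
  -- identify the unique j
  have h5 := Nat.div_add_mod (k + d - 1) d
  have h6 := Nat.mod_lt (k + d - 1) hd
  set q := (k + d - 1) / d with hq
  have hk1 : k ≤ d * q := by omega
  have hk2 : d * q < k + d := by omega
  set j0 : ℕ := d * q - k with hj0
  have hj0mem : j0 ∈ Finset.range d := Finset.mem_range.2 (by omega)
  rw [Finset.sum_eq_single_of_mem j0 hj0mem]
  · have : k + j0 = d * q := by omega
    rw [this, if_pos ⟨q, rfl⟩]
  · intro j hj hne
    have hjd := Finset.mem_range.1 hj
    have h0 : ¬ (d ∣ k + j) := by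
      intro hdvd
      have h1 : k + j ≡ 0 [MOD d] := (Nat.modEq_zero_iff_dvd).2 hdvd
      have h2 : k + j0 ≡ 0 [MOD d] := (Nat.modEq_zero_iff_dvd).2 ⟨q, by omega⟩
      have h3 : j ≡ j0 [MOD d] := (h1.trans h2.symm).add_left_cancel' k
      exact hne (Nat.ModEq.eq_of_lt_of_lt h3 hjd (by omega))
    rw [if_neg h0, zero_mul, zero_div]

lemma sum_inv_sq (d : ℕ) (hd : 0 < d) (t : ℂ) (ht : t ^ d ≠ 1) :
    ∑ ξ ∈ Polynomial.nthRootsFinset d (1 : ℂ), 1 / (1 - ξ * t) ^ 2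
      = (d : ℂ) * (1 + ((d : ℂ) - 1) * t ^ d) / (1 - t ^ d) ^ 2 := by
  have hu : (1 : ℂ) - t ^ d ≠ 0 := sub_ne_zero.2 (Ne.symm ht)
  have per : ∀ ξ ∈ Polynomial.nthRootsFinset d (1 : ℂ),
      1 / (1 - ξ * t) ^ 2 = (∑ j ∈ Finset.range d, (ξ * t) ^ j / (1 - ξ * t)) / (1 - t ^ d) := by
    intro ξ hξ
    have hξd : ξ ^ d = 1 := (Polynomial.mem_nthRootsFinset hd 1).1 hξ
    have hxd : (ξ * t) ^ d = t ^ d := by rw [mul_pow, hξd, one_mul]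
    have hne : (1 : ℂ) - ξ * t ≠ 0 := by
      intro hcon
      have : ξ * t = 1 := by linear_combination -hcon
      rw [← hxd, this, one_pow] at ht; exact ht rfl
    have hgeom : (1 - ξ * t) * ∑ j ∈ Finset.range d, (ξ * t) ^ j = 1 - t ^ d := by
      have := geom_sum_mul (ξ * t) d
      rw [← hxd]; linear_combination -this
    have hs : ∑ j ∈ Finset.range d, (ξ * t) ^ j = (1 - t ^ d) / (1 - ξ * t) := by
      rw [eq_div_iff hne]; linear_combination hgeom
    rw [← Finset.sum_div, hs]
    field_simp
  rw [Finset.sum_congr rfl per, ← Finset.sum_div, Finset.sum_comm]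
  have inner : ∀ j ∈ Finset.range d,
      ∑ ξ ∈ Polynomial.nthRootsFinset d (1 : ℂ), (ξ * t) ^ j / (1 - ξ * t)
        = (d : ℂ) * t ^ (d * ((j + d - 1) / d)) / (1 - t ^ d) :=
    fun j _ => sum_pow_div_one_sub d hd t ht j
  rw [Finset.sum_congr rfl inner, ← Finset.sum_div]
  have h0mem : (0 : ℕ) ∈ Finset.range d := Finset.mem_range.2 hd
  rw [Finset.sum_eq_sum_sdiff_singleton_add h0mem]
  have hcongr : ∀ j ∈ Finset.range d \ {0}, (d : ℂ) * t ^ (d * ((j + d - 1) / d))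
      = (d : ℂ) * t ^ d := by
    intro j hj
    simp only [Finset.mem_sdiff, Finset.mem_range, Finset.mem_singleton] at hj
    have : (j + d - 1) / d = 1 := by
      apply Nat.div_eq_of_lt_le <;> omega
    rw [this, mul_one]
  rw [Finset.sum_congr rfl hcongr, Finset.sum_const, nsmul_eq_mul]
  have hcard : (Finset.range d \ {0}).card = d - 1 := by
    rw [Finset.card_sdiff_of_subset (by simpa using h0mem)]; simp
  have h00 : d * ((0 + d - 1) / d) = 0 := by
    rw [Nat.div_eq_of_lt (by omega), mul_zero]
  rw [hcard, h00, pow_zero, mul_one, div_div, ← sq]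
  congr 1
  rw [Nat.cast_sub hd]
  push_cast
  ring
noncomputable def coA (D : ℂ) (m : ℕ) : ℂ := ((2*D - 3)*(m:ℂ) - (m:ℂ)^2)/2

lemma tele (D v : ℂ) : ∀ n : ℕ,
    (1-v)^3 * ∑ j ∈ Finset.range n, coA D j * v^j
      = (D-2)*v - (D-1)*v^2 + v^n *
        (-(coA D n) + (3*coA D n - coA D (n+1))*v
          + (-(3*coA D n) + 3*coA D (n+1) - coA D (n+2))*v^2) := by
  intro n
  induction n with
  | zero => simp only [Finset.range_zero, Finset.sum_empty, mul_zero, pow_zero, coA]; push_cast; ring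
  | succ n ih =>
    rw [Finset.sum_range_succ, mul_add, ih, pow_succ]
    simp only [coA]
    push_cast
    ring

lemma numeric_id (d : ℕ) (hd : 3 ≤ d) (δ : ℕ) (hδ2 : 2*δ = (d-1)*(d-2)) (v : ℂ) :
    (1-v)^3 * ∑ j ∈ Finset.range (d-2),
        (((δ:ℂ) - ((d:ℂ)-2-(j:ℂ))*((d:ℂ)-1-(j:ℂ))/2) * v^j)
      = (1 + ((d:ℂ)-1)*v)*(1-v) - (δ:ℂ)*(1-v)^2*v^(d-2) - (1 - v^d) := by
  have hδC : 2*(δ:ℂ) = ((d:ℂ)-1)*((d:ℂ)-2) := by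
    have := congrArg (Nat.cast : ℕ → ℂ) hδ2
    push_cast [Nat.cast_sub (by omega : 1 ≤ d), Nat.cast_sub (by omega : 2 ≤ d)] at this
    linear_combination this
  have hsummand : ∀ j ∈ Finset.range (d-2),
      ((δ:ℂ) - ((d:ℂ)-2-(j:ℂ))*((d:ℂ)-1-(j:ℂ))/2) * v^j = coA (d:ℂ) j * v^j := by
    intro j _
    unfold coA
    linear_combination (v^j/2) * hδC
  rw [Finset.sum_congr rfl hsummand, tele]
  have hvd : v^d = v^(d-2) * v^2 := by rw [← pow_add]; congr 1; omega
  have hc1 : ((d-2+1 : ℕ):ℂ) = (d:ℂ) - 1 := by push_cast [Nat.cast_sub (by omega : 2 ≤ d)]; ring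
  have hc2 : ((d-2+2 : ℕ):ℂ) = (d:ℂ) := by push_cast [Nat.cast_sub (by omega : 2 ≤ d)]; ring
  have hc0 : ((d-2 : ℕ):ℂ) = (d:ℂ) - 2 := by push_cast [Nat.cast_sub (by omega : 2 ≤ d)]; ring
  unfold coA
  rw [hvd, hc0, hc1, hc2]
  linear_combination ((1-v)^2 * v^(d-2)/2) * hδC

lemma gaps_lt (Γ : Set ℕ) (hfin : Γᶜ.Finite) (δ : ℕ) (hδ : Γᶜ.ncard = δ) (hδpos : 0 < δ)
    (hsym : ∀ k : ℕ, k < 2 * δ → (k ∈ Γ ↔ (2 * δ - 1 - k) ∉ Γ)) :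
    ∀ k ∈ hfin.toFinset, k < 2 * δ := by
  classical
  set F1 := (Finset.range (2 * δ)).filter (fun k => k ∈ Γ) with hF1
  set F2 := (Finset.range (2 * δ)).filter (fun k => k ∉ Γ) with hF2
  have hbij : F1.card = F2.card := by
    apply Finset.card_bij (fun k _ => 2 * δ - 1 - k)
    · intro a ha
      simp only [hF1, Finset.mem_filter, Finset.mem_range] at ha
      simp only [hF2, Finset.mem_filter, Finset.mem_range]
      exact ⟨by omega, (hsym a ha.1).1 ha.2⟩
    · intro a ha b hb hab
      simp only [hF1, Finset.mem_filter, Finset.mem_range] at ha hb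
      omega
    · intro g hg
      simp only [hF2, Finset.mem_filter, Finset.mem_range] at hg
      refine ⟨2 * δ - 1 - g, ?_, by omega⟩
      simp only [hF1, Finset.mem_filter, Finset.mem_range]
      have h1 : 2 * δ - 1 - g < 2 * δ := by omega
      refine ⟨h1, (hsym _ h1).2 ?_⟩
      have : 2 * δ - 1 - (2 * δ - 1 - g) = g := by omega
      rw [this]; exact hg.2
  have hsum := Finset.card_filter_add_card_filter_not
    (s := Finset.range (2 * δ)) (p := fun k => k ∈ Γ)
  rw [Finset.card_range] at hsum
  have hGcard : hfin.toFinset.card = δ := by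
    rw [← Set.ncard_eq_toFinset_card _ hfin, hδ]
  have hsub : F2 ⊆ hfin.toFinset := by
    intro k hk
    simp only [hF2, Finset.mem_filter] at hk
    simp only [Set.Finite.mem_toFinset, Set.mem_compl_iff]
    exact hk.2
  have hF2card : F2.card = δ := by
    have : F1.card + F2.card = 2 * δ := hsum
    omega
  have heq : F2 = hfin.toFinset :=
    Finset.eq_of_subset_of_card_le hsub (by rw [hF2card, hGcard])
  intro k hk
  rw [← heq] at hk
  simp only [hF2, Finset.mem_filter, Finset.mem_range] at hk
  exact hk.1

lemma sym_count (Γ : Set ℕ) [DecidablePred (· ∈ Γ)] (hfin : Γᶜ.Finite) (δ : ℕ)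
    (hsym : ∀ k : ℕ, k < 2 * δ → (k ∈ Γ ↔ (2 * δ - 1 - k) ∉ Γ))
    (hGcard : hfin.toFinset.card = δ)
    (hgaps : ∀ k ∈ hfin.toFinset, k < 2 * δ)
    (d l : ℕ) (hl : l + 3 ≤ d)
    (hkey : 2 * δ = l * d + (d - 3 - l) * d + 2) :
    ((Finset.range (l * d + 1)).filter (fun k => k ∈ Γ)).card
      + (hfin.toFinset.filter (fun k => k ≤ (d - 3 - l) * d)).card = δ := by
  classical
  have h2 := Finset.card_filter_add_card_filter_not
    (s := hfin.toFinset) (p := fun k => k ≤ (d - 3 - l) * d)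
  rw [hGcard] at h2
  have hAC : ((Finset.range (l * d + 1)).filter (fun k => k ∈ Γ)).card
      = (hfin.toFinset.filter (fun k => ¬ k ≤ (d - 3 - l) * d)).card := by
    apply Finset.card_bij (fun k _ => 2 * δ - 1 - k)
    · intro a ha
      simp only [Finset.mem_filter, Finset.mem_range] at ha
      have ha2δ : a < 2 * δ := by omega
      simp only [Finset.mem_filter, Set.Finite.mem_toFinset, Set.mem_compl_iff]
      exact ⟨(hsym a ha2δ).1 ha.2, by omega⟩
    · intro a ha b hb hab
      simp only [Finset.mem_filter, Finset.mem_range] at ha hb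
      omega
    · intro g hg
      simp only [Finset.mem_filter, Set.Finite.mem_toFinset, Set.mem_compl_iff] at hg
      have hg2δ : g < 2 * δ := hgaps g (by simpa [Set.Finite.mem_toFinset] using hg.1)
      refine ⟨2 * δ - 1 - g, ?_, by omega⟩
      simp only [Finset.mem_filter, Finset.mem_range]
      have h1 : 2 * δ - 1 - g < 2 * δ := by omega
      refine ⟨by omega, (hsym _ h1).2 ?_⟩
      have : 2 * δ - 1 - (2 * δ - 1 - g) = g := by omega
      rw [this]; exact hg.1
  omega

lemma abel_sum (G : Finset ℕ) (d N : ℕ) (hd : 0 < d) (hbound : ∀ k ∈ G, k ≤ N * d) (u : ℂ) :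
    ∑ k ∈ G, u ^ ((k + d - 1) / d)
      = (G.card : ℂ) * u ^ N
        + ∑ mm ∈ Finset.range N,
            (u ^ mm - u ^ (mm + 1)) * ((G.filter (fun k => k ≤ mm * d)).card : ℂ) := by
  have hml : ∀ k mm : ℕ, (k + d - 1) / d ≤ mm ↔ k ≤ mm * d := by
    intro k mm
    have h3 := Nat.div_add_mod (k + d - 1) d
    have h4 := Nat.mod_lt (k + d - 1) hd
    have h5 : mm * d = d * mm := Nat.mul_comm mm d
    constructor
    · intro h
      have h2 : d * ((k + d - 1) / d) ≤ d * mm := Nat.mul_le_mul_left d h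
      omega
    · intro h
      by_contra hcon
      push_neg at hcon
      have h2 : d * (mm + 1) ≤ d * ((k + d - 1) / d) := Nat.mul_le_mul_left d (by omega)
      have h6 : d * (mm + 1) = d * mm + d := by ring
      omega
  have per : ∀ k ∈ G, u ^ ((k + d - 1) / d)
      = u ^ N + ∑ mm ∈ Finset.range N, (if k ≤ mm * d then u ^ mm - u ^ (mm + 1) else 0) := by
    intro k hk
    have hmk : (k + d - 1) / d ≤ N := (hml k N).2 (hbound k hk)
    have hfil : (Finset.range N).filter (fun mm => k ≤ mm * d)
        = Finset.Ico ((k + d - 1) / d) N := by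
      ext mm
      simp only [Finset.mem_filter, Finset.mem_range, Finset.mem_Ico, ← hml]
      omega
    rw [← Finset.sum_filter, hfil]
    have ht1 := Finset.sum_Ico_eq_sub (fun i => u ^ i - u ^ (i + 1)) hmk
    have ht2 := Finset.sum_range_sub' (fun i => u ^ i) N
    have ht3 := Finset.sum_range_sub' (fun i => u ^ i) ((k + d - 1) / d)
    rw [ht2, ht3] at ht1
    rw [ht1]
    ring
  rw [Finset.sum_congr rfl per, Finset.sum_add_distrib, Finset.sum_const, nsmul_eq_mul,
    Finset.sum_comm]
  congr 1
  refine Finset.sum_congr rfl fun mm _ => ?_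
  rw [← Finset.sum_filter, Finset.sum_const, nsmul_eq_mul, mul_comm]

lemma final_alg (dC δC u X Y Gs NUM : ℂ) (hd : dC ≠ 0) (hu : 1 - u ≠ 0)
    (hnum : (1 - u) ^ 3 * NUM
      = (1 + (dC - 1) * u) * (1 - u) - δC * (1 - u) ^ 2 * X - (1 - Y)) :
    (1 / dC) * (dC * (1 + (dC - 1) * u) / (1 - u) ^ 2
        - dC * (δC * X + (1 - u) * Gs) / (1 - u))
      - (1 - Y) / (1 - u) ^ 3 = NUM - Gs := by
  have h1 : (1 - u) ≠ 0 := hu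
  have h2 : (1 - u) ^ 2 ≠ 0 := pow_ne_zero _ hu
  have h3 : (1 - u) ^ 3 ≠ 0 := pow_ne_zero _ hu
  rw [div_sub_div _ _ h2 h1, one_div_mul_eq_div, div_div,
    div_sub_div _ _ (mul_ne_zero (mul_ne_zero h2 h1) hd) h3,
    div_eq_iff (mul_ne_zero (mul_ne_zero (mul_ne_zero h2 h1) hd) h3)]
  linear_combination (-(dC * (1 - u) ^ 3)) * hnum

theorem torsion_identity (d : ℕ) (hd : 3 ≤ d)
    (Γ : Set ℕ) (h0 : 0 ∈ Γ) (hadd : ∀ a ∈ Γ, ∀ b ∈ Γ, a + b ∈ Γ)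
    (hfin : Γᶜ.Finite) (δ : ℕ) (hδ2 : 2 * δ = (d - 1) * (d - 2))
    (hδ : Γᶜ.ncard = δ)
    (hsym : ∀ k : ℕ, k < 2 * δ → (k ∈ Γ ↔ (2 * δ - 1 - k) ∉ Γ))
    (Q Δ : Polynomial ℤ)
    (hQ : Q = ∑ k ∈ hfin.toFinset, ∑ i ∈ Finset.range k, (X : Polynomial ℤ) ^ i)
    (hΔ : Δ = 1 + (δ : Polynomial ℤ) * (X - 1) + (X - 1) ^ 2 * Q)
    (c : ℕ → ℕ) (hc : ∀ l : ℕ, c l = {k : ℕ | k ∈ Γ ∧ k ≤ l * d}.ncard) :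
    ∀ t : ℂ, t ^ d ≠ 1 →
      (1 / (d : ℂ)) * (∑ ξ ∈ Polynomial.nthRootsFinset d (1 : ℂ),
          (Polynomial.aeval (ξ * t) Δ) / (1 - ξ * t) ^ 2)
        - (1 - t ^ (d ^ 2)) / (1 - t ^ d) ^ 3
      = ∑ l ∈ Finset.range (d - 2),
          ((c l : ℂ) - ((l : ℂ) + 1) * ((l : ℂ) + 2) / 2) * t ^ ((d - 3 - l) * d) := by
  classical
  intro t ht
  have hd0 : 0 < d := by omega
  have hdC : (d : ℂ) ≠ 0 := Nat.cast_ne_zero.2 (by omega)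
  have hu : (1 : ℂ) - t ^ d ≠ 0 := sub_ne_zero.2 (Ne.symm ht)
  set Gf := hfin.toFinset with hGf
  have hGcard : Gf.card = δ := by rw [hGf, ← Set.ncard_eq_toFinset_card _ hfin, hδ]
  have hδpos : 0 < δ := by
    have h1 : 1 * 1 ≤ (d - 1) * (d - 2) := Nat.mul_le_mul (by omega) (by omega)
    omega
  have hgaps := gaps_lt Γ hfin δ hδ hδpos hsym
  have e1 : (d - 1) * (d - 2) = (d - 3) * d + 2 := by
    obtain ⟨e, rfl⟩ : ∃ e, d = e + 3 := ⟨d - 3, by omega⟩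
    have h1 : e + 3 - 1 = e + 2 := by omega
    have h2 : e + 3 - 2 = e + 1 := by omega
    have h3 : e + 3 - 3 = e := by omega
    rw [h1, h2, h3]; ring
  have hgaps' : ∀ k ∈ Gf, k ≤ (d - 2) * d := by
    intro k hk
    have h1 := hgaps k hk
    have e2 : (d - 3) * d + d = (d - 2) * d := by
      have h2 : d - 2 = (d - 3) + 1 := by omega
      rw [h2, Nat.succ_mul]
    omega
  -- Δ decomposition
  have haev : ∀ x : ℂ, Polynomial.aeval x Δ = 1 - (1 - x) * ∑ k ∈ Gf, x ^ k := by
    intro x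
    have h2 : (Polynomial.aeval x) Q = ∑ k ∈ Gf, ∑ i ∈ Finset.range k, x ^ i := by
      rw [hQ]; simp [map_sum]
    have h3 : (x - 1) * ∑ k ∈ Gf, ∑ i ∈ Finset.range k, x ^ i = (∑ k ∈ Gf, x ^ k) - δ := by
      rw [Finset.mul_sum]
      have hper : ∀ k ∈ Gf, (x - 1) * ∑ i ∈ Finset.range k, x ^ i = x ^ k - 1 := by
        intro k _; have := geom_sum_mul x k; linear_combination this
      rw [Finset.sum_congr rfl hper, Finset.sum_sub_distrib, Finset.sum_const, hGcard,
        nsmul_eq_mul, mul_one]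
    rw [hΔ]
    simp only [map_add, map_mul, map_one, map_pow, map_sub, Polynomial.aeval_X, map_natCast]
    rw [h2]
    linear_combination (x - 1) * h3
  -- per-root decomposition
  have hsummand : ∀ ξ ∈ Polynomial.nthRootsFinset d (1 : ℂ),
      Polynomial.aeval (ξ * t) Δ / (1 - ξ * t) ^ 2
        = 1 / (1 - ξ * t) ^ 2 - ∑ k ∈ Gf, (ξ * t) ^ k / (1 - ξ * t) := by
    intro ξ hξ
    have hξd : ξ ^ d = 1 := (Polynomial.mem_nthRootsFinset hd0 1).1 hξ
    have hxd : (ξ * t) ^ d = t ^ d := by rw [mul_pow, hξd, one_mul]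
    have hne : (1 : ℂ) - ξ * t ≠ 0 := by
      intro hcon
      have h1 : ξ * t = 1 := by linear_combination -hcon
      rw [← hxd, h1, one_pow] at ht; exact ht rfl
    rw [haev, ← Finset.sum_div, sub_div]
    congr 1
    rw [sq, mul_div_mul_left _ _ hne]
  have hsum1 := sum_inv_sq d hd0 t ht
  have hsum2 : ∑ ξ ∈ Polynomial.nthRootsFinset d (1 : ℂ), ∑ k ∈ Gf, (ξ * t) ^ k / (1 - ξ * t)
      = (d : ℂ) * (∑ k ∈ Gf, (t ^ d) ^ ((k + d - 1) / d)) / (1 - t ^ d) := by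
    rw [Finset.sum_comm]
    have hper : ∀ k ∈ Gf, ∑ ξ ∈ Polynomial.nthRootsFinset d (1 : ℂ), (ξ * t) ^ k / (1 - ξ * t)
        = (d : ℂ) * (t ^ d) ^ ((k + d - 1) / d) / (1 - t ^ d) := by
      intro k _
      rw [sum_pow_div_one_sub d hd0 t ht k, pow_mul]
    rw [Finset.sum_congr rfl hper, ← Finset.sum_div, ← Finset.mul_sum]
  have hS := abel_sum Gf d (d - 2) hd0 hgaps' (t ^ d)
  rw [hGcard] at hS
  have hS2 : ∑ mm ∈ Finset.range (d - 2),
      ((t ^ d) ^ mm - (t ^ d) ^ (mm + 1)) * ((Gf.filter (fun k => k ≤ mm * d)).card : ℂ)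
        = (1 - t ^ d) * ∑ mm ∈ Finset.range (d - 2),
            ((Gf.filter (fun k => k ≤ mm * d)).card : ℂ) * (t ^ d) ^ mm := by
    rw [Finset.mul_sum]
    exact Finset.sum_congr rfl fun mm _ => by rw [pow_succ]; ring
  rw [hS2] at hS
  -- symmetry relation
  have hcc : ∀ j, j < d - 2 → (c (d - 3 - j) : ℂ)
      = (δ : ℂ) - ((Gf.filter (fun k => k ≤ j * d)).card : ℂ) := by
    intro j hj
    have hkey : 2 * δ = (d - 3 - j) * d + (d - 3 - (d - 3 - j)) * d + 2 := by
      have e2 : (d - 3) * d = (d - 3 - j) * d + (d - 3 - (d - 3 - j)) * d := by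
        rw [← Nat.add_mul]; congr 1; omega
      omega
    have hsc := sym_count Γ hfin δ hsym hGcard hgaps d (d - 3 - j) (by omega) hkey
    have hj' : d - 3 - (d - 3 - j) = j := by omega
    rw [hj'] at hsc
    have hcval : c (d - 3 - j)
        = ((Finset.range ((d - 3 - j) * d + 1)).filter (fun k => k ∈ Γ)).card := by
      rw [hc]
      have hset : {k : ℕ | k ∈ Γ ∧ k ≤ (d - 3 - j) * d}
          = ↑((Finset.range ((d - 3 - j) * d + 1)).filter (fun k => k ∈ Γ)) := by
        ext k
        simp [Nat.lt_succ_iff, and_comm]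
      rw [hset, Set.ncard_coe_finset]
    have hnat : c (d - 3 - j) + (Gf.filter (fun k => k ≤ j * d)).card = δ := by
      rw [hcval]; exact hsc
    have hcast := congrArg (Nat.cast : ℕ → ℂ) hnat
    push_cast at hcast
    linear_combination hcast
  -- RHS transformation
  have hRHSeq : (∑ l ∈ Finset.range (d - 2),
        ((c l : ℂ) - ((l : ℂ) + 1) * ((l : ℂ) + 2) / 2) * t ^ ((d - 3 - l) * d))
      = ∑ j ∈ Finset.range (d - 2),
          ((δ : ℂ) - ((Gf.filter (fun k => k ≤ j * d)).card : ℂ)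
            - (((d : ℂ) - 2 - j) * ((d : ℂ) - 1 - j) / 2)) * (t ^ d) ^ j := by
    rw [← Finset.sum_range_reflect]
    refine Finset.sum_congr rfl fun j hj => ?_
    have hj' := Finset.mem_range.1 hj
    have h1 : d - 2 - 1 - j = d - 3 - j := by omega
    have h2 : d - 3 - (d - 3 - j) = j := by omega
    have h3 : t ^ (j * d) = (t ^ d) ^ j := by rw [mul_comm, pow_mul]
    have h4 : ((d - 3 - j : ℕ) : ℂ) = (d : ℂ) - 3 - j := by
      have h5 : (d - 3 - j) + (3 + j) = d := by omega
      have h6 := congrArg (Nat.cast : ℕ → ℂ) h5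
      push_cast at h6
      linear_combination h6
    simp only [h1, h2, h3, h4, hcc j hj']
    ring
  rw [hRHSeq]
  -- split RHS
  have hsplit : ∑ j ∈ Finset.range (d - 2),
        ((δ : ℂ) - ((Gf.filter (fun k => k ≤ j * d)).card : ℂ)
          - (((d : ℂ) - 2 - j) * ((d : ℂ) - 1 - j) / 2)) * (t ^ d) ^ j
      = (∑ j ∈ Finset.range (d - 2),
          ((δ : ℂ) - ((d : ℂ) - 2 - (j : ℂ)) * ((d : ℂ) - 1 - (j : ℂ)) / 2) * (t ^ d) ^ j)
        - ∑ j ∈ Finset.range (d - 2),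
            ((Gf.filter (fun k => k ≤ j * d)).card : ℂ) * (t ^ d) ^ j := by
    rw [← Finset.sum_sub_distrib]
    exact Finset.sum_congr rfl fun j _ => by ring
  rw [hsplit]
  have hnum := numeric_id d hd δ hδ2 (t ^ d)
  -- LHS transformation
  rw [Finset.sum_congr rfl hsummand, Finset.sum_sub_distrib, hsum1, hsum2, hS]
  have hdsq : t ^ d ^ 2 = (t ^ d) ^ d := by rw [← pow_mul, sq]
  rw [hdsq]
  exact final_alg (d:ℂ) (δ:ℂ) (t^d) _ _ _ _ hdC hu hnum
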